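/- For positive definite matrices A and B, the geometric mean G = A♯B = A^{1/2}(A^{-1/2}BA^{-1/2})^{1/2}A^{1/2} is the unique positive definite solution X of the Riccati equation X A⁻¹ X = B. -/

import Mathlib

open Matrix ComplexOrder

lemma aux_conj_posDef {n : Type*} [Fintype n] [DecidableEq n]
    {R T : Matrix n n ℂ} (hR : R.PosDef) (hT : T.PosDef) :
    (R * T * R).PosDef := by
  have hdet : IsUnit R.det := isUnit_iff_ne_zero.2 (ne_of_gt hR.det_pos)
  refine posDef_iff_dotProduct_mulVec.mpr ⟨?_, fun x hx => ?_⟩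
  · show (R * T * R)ᴴ = R * T * R
    simp [conjTranspose_mul, hR.isHermitian.eq, hT.isHermitian.eq, Matrix.mul_assoc]
  · have hx' : R *ᵥ x ≠ 0 := by
      intro h
      apply hx
      have := congrArg (fun v => R⁻¹ *ᵥ v) h
      simpa [Matrix.mulVec_mulVec, Matrix.nonsing_inv_mul R hdet] using this
    have := hT.dotProduct_mulVec_pos hx'
    have hkey : star x ⬝ᵥ (R * T * R) *ᵥ x = star (R *ᵥ x) ⬝ᵥ T *ᵥ (R *ᵥ x) := by
      rw [star_mulVec, hR.isHermitian.eq, ← Matrix.mulVec_mulVec, ← Matrix.mulVec_mulVec,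
        dotProduct_mulVec]
    rw [hkey]
    exact this

theorem stmt_5 (M : ℕ) (A B R T : Matrix (Fin M) (Fin M) ℂ)
    (hA : A.PosDef) (hB : B.PosDef)
    (hR : R.PosDef) (hR2 : R * R = A)
    (hT : T.PosDef) (hT2 : T * T = R⁻¹ * B * R⁻¹) :
    (R * T * R).PosDef ∧ (R * T * R) * A⁻¹ * (R * T * R) = B ∧
      ∀ X : Matrix (Fin M) (Fin M) ℂ, X.PosDef → X * A⁻¹ * X = B →
        X = R * T * R := by
  have hdet : IsUnit R.det := isUnit_iff_ne_zero.2 (ne_of_gt hR.det_pos)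
  have hAinv : A⁻¹ = R⁻¹ * R⁻¹ := by rw [← hR2, Matrix.mul_inv_rev]
  have hRR : R * R⁻¹ = 1 := Matrix.mul_nonsing_inv R hdet
  have hRR' : R⁻¹ * R = 1 := Matrix.nonsing_inv_mul R hdet
  have heq : (R * T * R) * A⁻¹ * (R * T * R) = B := by
    rw [hAinv]
    calc R * T * R * (R⁻¹ * R⁻¹) * (R * T * R)
        = R * T * ((R * R⁻¹) * (R⁻¹ * R)) * T * R := by
          simp only [Matrix.mul_assoc]
      _ = R * (T * T) * R := by rw [hRR, hRR']; simp [Matrix.mul_assoc]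
      _ = R * (R⁻¹ * B * R⁻¹) * R := by rw [hT2]
      _ = (R * R⁻¹) * B * (R⁻¹ * R) := by simp only [Matrix.mul_assoc]
      _ = B := by rw [hRR, hRR']; simp
  refine ⟨aux_conj_posDef hR hT, heq, fun X hX hXeq => ?_⟩
  have hY : (R⁻¹ * X * R⁻¹).PosDef := aux_conj_posDef hR.inv hX
  have hYsq : (R⁻¹ * X * R⁻¹) ^ 2 = T ^ 2 := by
    rw [pow_two, pow_two, hT2, ← hXeq, hAinv]
    simp only [Matrix.mul_assoc]
  have hYT : R⁻¹ * X * R⁻¹ = T := by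
    open scoped MatrixOrder Matrix.Norms.L2Operator in
    exact (CFC.sq_eq_sq_iff _ _ hY.posSemidef.nonneg hT.posSemidef.nonneg).mp hYsq
  calc X = (R * R⁻¹) * X * (R⁻¹ * R) := by rw [hRR, hRR']; simp
    _ = R * (R⁻¹ * X * R⁻¹) * R := by simp only [Matrix.mul_assoc]
    _ = R * T * R := by rw [hYT]
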